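/- Let 𝒢 be a time-homogeneous Markov chain on states {1,…,L} with transition matrix P, let A_1,…,A_L be n×n matrices, and let x(k+1) = α·A_{𝒢(k)}·x(k). Define ζ(k) ∈ ℝ^L as the indicator vector of the state 𝒢(k). Then E[ζ(k+1) ⊗ x(k+1)] = α·𝒜·E[ζ(k) ⊗ x(k)] for all k ≥ 0, where 𝒜 = (Pᵀ ⊗ I_n)(A_1 ⊕ ⋯ ⊕ A_L). -/

import Mathlib

open Matrix MeasureTheory

noncomputable def calA {n L : ℕ} (P : Matrix (Fin L) (Fin L) ℝ)
    (A : Fin L → Matrix (Fin n) (Fin n) ℝ) :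
    Matrix (Fin L × Fin n) (Fin L × Fin n) ℝ :=
  (Matrix.kroneckerMap (· * ·) Pᵀ (1 : Matrix (Fin n) (Fin n) ℝ)) *
    ((Matrix.blockDiagonal fun ℓ => A ℓ).reindex
      (Equiv.prodComm (Fin n) (Fin L)) (Equiv.prodComm (Fin n) (Fin L)))

noncomputable def Xdet {n L : ℕ} (A : Fin L → Matrix (Fin n) (Fin n) ℝ) (α : ℝ)
    (x0 : Fin n → ℝ) : (k : ℕ) → (Fin k → Fin L) → Fin n → ℝ
  | 0, _ => x0
  | (k + 1), s => α • (A (s (Fin.last k)) *ᵥ Xdet A α x0 k (fun t => s t.castSucc))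

lemma hist_meas {L : ℕ} {Ω : Type*} [MeasurableSpace Ω] {G : ℕ → Ω → Fin L}
    (hG : ∀ k, Measurable (G k)) (k : ℕ) (s : Fin k → Fin L) :
    MeasurableSet {ω | ∀ t : Fin k, G t ω = s t} := by
  have : {ω | ∀ t : Fin k, G t ω = s t} = ⋂ t : Fin k, (G t) ⁻¹' {s t} := by
    ext ω; simp [Set.mem_iInter]
  rw [this]
  exact MeasurableSet.iInter fun t => (hG t) (measurableSet_singleton _)

lemma integral_hist {L : ℕ} {Ω : Type*} [MeasurableSpace Ω] (μ : Measure Ω)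
    [IsProbabilityMeasure μ] {G : ℕ → Ω → Fin L} (hG : ∀ k, Measurable (G k))
    (k : ℕ) (g : (Fin k → Fin L) → ℝ) :
    ∫ ω, g (fun t => G t ω) ∂μ
      = ∑ s : Fin k → Fin L, g s * (μ {ω | ∀ t : Fin k, G t ω = s t}).toReal := by
  have key : ∀ ω, g (fun t => G t ω)
      = ∑ s : Fin k → Fin L,
          Set.indicator {ω | ∀ t : Fin k, G t ω = s t} (fun _ => g s) ω := by
    intro ω
    rw [Finset.sum_congr rfl (fun s _ => by
      rw [Set.indicator_apply])]
    have : ∀ s : Fin k → Fin L,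
        (if ω ∈ {ω | ∀ t : Fin k, G t ω = s t} then g s else 0)
          = if (fun t : Fin k => G t ω) = s then g s else 0 := by
      intro s
      congr 1
      simp [Set.mem_setOf_eq, funext_iff]
    simp_rw [this]
    simp
  simp_rw [key]
  rw [integral_finset_sum _ (fun s _ =>
    (integrable_const (g s)).indicator (hist_meas hG k s))]
  refine Finset.sum_congr rfl fun s _ => ?_
  rw [integral_indicator_const _ (hist_meas hG k s)]
  simp [mul_comm, Measure.real]

lemma calA_entry {n L : ℕ} (P : Matrix (Fin L) (Fin L) ℝ)
    (A : Fin L → Matrix (Fin n) (Fin n) ℝ) (j ℓ : Fin L) (i m : Fin n) :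
    calA P A (j, i) (ℓ, m) = P ℓ j * A ℓ i m := by
  unfold calA
  rw [Matrix.mul_apply]
  rw [Fintype.sum_prod_type]
  simp [Matrix.kroneckerMap, Matrix.blockDiagonal_apply, Matrix.one_apply,
    Matrix.transpose_apply]

lemma sum_rot {β γ δ : Type*} [Fintype β] [Fintype γ] [Fintype δ] (F : β → γ → δ → ℝ) :
    ∑ b, ∑ c, ∑ d, F b c d = ∑ d, ∑ b, ∑ c, F b c d := by
  have h : ∀ b : β, ∑ c, ∑ d, F b c d = ∑ d, ∑ c, F b c d := fun b =>
    Finset.sum_comm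
  simp_rw [h]
  exact Finset.sum_comm

/-- For a time-homogeneous Markov chain $\mathcal G$ on $[L]$ with transition
matrix $P$ and the jump linear system $x(k+1)=\alpha A_{\mathcal G(k)}x(k)$,
the lifted first moments satisfy
$E[\zeta(k+1)\otimes x(k+1)] = \alpha\mathcal A\,E[\zeta(k)\otimes x(k)]$. -/
theorem stmt10 {n L : ℕ} {Ω : Type*} [MeasurableSpace Ω]
    (μ : Measure Ω) [IsProbabilityMeasure μ]
    (P : Matrix (Fin L) (Fin L) ℝ)
    (hP : ∀ ℓ k, 0 ≤ P ℓ k) (hProw : ∀ ℓ, ∑ k, P ℓ k = 1)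
    (G : ℕ → Ω → Fin L) (hG : ∀ k, Measurable (G k))
    -- time-homogeneous Markov property with transition probabilities $P_{\ell k}$:
    (hMarkov : ∀ (k : ℕ) (j : Fin L) (s : Fin (k + 1) → Fin L),
      μ {ω | G (k + 1) ω = j ∧ ∀ t : Fin (k + 1), G t ω = s t}
        = ENNReal.ofReal (P (s (Fin.last k)) j) *
            μ {ω | ∀ t : Fin (k + 1), G t ω = s t})
    (A : Fin L → Matrix (Fin n) (Fin n) ℝ) (α : ℝ)
    (x0 : Fin n → ℝ) (x : ℕ → Ω → Fin n → ℝ)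
    (hx0 : ∀ ω, x 0 ω = x0)
    (hx : ∀ k ω, x (k + 1) ω = α • ((A (G k ω)) *ᵥ x k ω)) :
    ∀ k : ℕ,
      (fun p : Fin L × Fin n =>
          ∫ ω, (if G (k + 1) ω = p.1 then (1 : ℝ) else 0) * x (k + 1) ω p.2 ∂μ)
        = (α • calA P A) *ᵥ
          (fun p : Fin L × Fin n =>
            ∫ ω, (if G k ω = p.1 then (1 : ℝ) else 0) * x k ω p.2 ∂μ) := by
  intro k
  have x_eq : ∀ m ω, x m ω = Xdet A α x0 m (fun t => G t ω) := by
    intro m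
    induction m with
    | zero => intro ω; simp [Xdet, hx0]
    | succ m ih =>
      intro ω
      rw [hx m ω, ih ω]
      simp only [Xdet, Fin.val_last, Fin.coe_castSucc]
  have Xsucc : ∀ (kk : ℕ) (s : Fin (kk + 1) → Fin L) (i : Fin n),
      Xdet A α x0 (kk + 1) s i
        = α * ∑ m, A (s (Fin.last kk)) i m * Xdet A α x0 kk (fun t => s t.castSucc) m := by
    intro kk s i
    simp [Xdet, Matrix.mulVec, dotProduct]
  funext p
  obtain ⟨j, i⟩ := p
  -- left side as a sum over histories of length k+1
  have L1 : (∫ ω, (if G (k + 1) ω = j then (1 : ℝ) else 0) * x (k + 1) ω i ∂μ)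
      = ∑ s : Fin (k + 1) → Fin L,
          P (s (Fin.last k)) j * Xdet A α x0 (k + 1) s i *
            (μ {ω | ∀ t : Fin (k + 1), G t ω = s t}).toReal := by
    set g : (Fin (k + 2) → Fin L) → ℝ := fun h =>
      (if h (Fin.last (k + 1)) = j then (1 : ℝ) else 0) *
        Xdet A α x0 (k + 1) (fun t => h t.castSucc) i with hg
    have hE : ∀ h : Fin (k + 2) → Fin L,
        μ {ω | ∀ t : Fin (k + 2), G t ω = h t}
          = ENNReal.ofReal (P (h (Fin.castSucc (Fin.last k))) (h (Fin.last (k + 1)))) *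
              μ {ω | ∀ t : Fin (k + 1), G t ω = h t.castSucc} := by
      intro h
      have hm := hMarkov k (h (Fin.last (k + 1))) (fun t => h t.castSucc)
      rw [← hm]
      congr 1
      ext ω
      simp only [Set.mem_setOf_eq]
      constructor
      · intro hw
        refine ⟨?_, fun t => ?_⟩
        · have := hw (Fin.last (k + 1)); simpa [Fin.val_last] using this
        · have := hw t.castSucc; simpa [Fin.coe_castSucc] using this
      · rintro ⟨h1', h2'⟩ t
        refine Fin.lastCases ?_ (fun u => ?_) t
        · simpa [Fin.val_last] using h1'
        · simpa [Fin.coe_castSucc] using h2' u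
    calc (∫ ω, (if G (k + 1) ω = j then (1 : ℝ) else 0) * x (k + 1) ω i ∂μ)
        = ∫ ω, g (fun t : Fin (k + 2) => G t ω) ∂μ := by
          congr 1
          funext ω
          simp only [hg, Fin.val_last, Fin.coe_castSucc]
          rw [x_eq]
      _ = ∑ h : Fin (k + 2) → Fin L,
            g h * (μ {ω | ∀ t : Fin (k + 2), G t ω = h t}).toReal :=
          integral_hist μ hG (k + 2) g
      _ = ∑ s : Fin (k + 1) → Fin L,
            P (s (Fin.last k)) j * Xdet A α x0 (k + 1) s i *
              (μ {ω | ∀ t : Fin (k + 1), G t ω = s t}).toReal := by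
          simp_rw [hE, ENNReal.toReal_mul, ENNReal.toReal_ofReal (hP _ _)]
          rw [← Equiv.sum_comp (Fin.snocEquiv (fun _ : Fin (k + 2) => Fin L)),
            Fintype.sum_prod_type]
          simp only [hg, Fin.snocEquiv, Equiv.coe_fn_mk, Fin.snoc_last, Fin.snoc_castSucc]
          rw [Finset.sum_comm]
          refine Finset.sum_congr rfl fun s _ => ?_
          rw [Finset.sum_eq_single j]
          · simp only [if_pos rfl, if_true, eq_self_iff_true, one_mul]
            ring
          · intro b _ hb
            simp [if_neg hb]
          · intro habs
            exact absurd (Finset.mem_univ j) habs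
  show _ = ((α • calA P A) *ᵥ _) (j, i)
  rw [L1]
  -- right side
  have R1 : ∀ (ℓ : Fin L) (m : Fin n),
      (∫ ω, (if G k ω = ℓ then (1 : ℝ) else 0) * x k ω m ∂μ)
        = ∑ s : Fin (k + 1) → Fin L,
            (if s (Fin.last k) = ℓ then (1 : ℝ) else 0) *
              Xdet A α x0 k (fun t => s t.castSucc) m *
              (μ {ω | ∀ t : Fin (k + 1), G t ω = s t}).toReal := by
    intro ℓ m
    set g : (Fin (k + 1) → Fin L) → ℝ := fun h =>
      (if h (Fin.last k) = ℓ then (1 : ℝ) else 0) *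
        Xdet A α x0 k (fun t => h t.castSucc) m with hg
    calc (∫ ω, (if G k ω = ℓ then (1 : ℝ) else 0) * x k ω m ∂μ)
        = ∫ ω, g (fun t : Fin (k + 1) => G t ω) ∂μ := by
          congr 1
          funext ω
          simp only [hg, Fin.val_last, Fin.coe_castSucc]
          rw [x_eq]
      _ = ∑ s : Fin (k + 1) → Fin L,
            g s * (μ {ω | ∀ t : Fin (k + 1), G t ω = s t}).toReal :=
          integral_hist μ hG (k + 1) g
      _ = _ := by
          refine Finset.sum_congr rfl fun s _ => ?_
          rw [hg]
  simp only [Matrix.mulVec, dotProduct, Matrix.smul_apply, smul_eq_mul]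
  rw [Fintype.sum_prod_type]
  simp_rw [calA_entry, R1, Finset.mul_sum]
  rw [sum_rot]
  refine Finset.sum_congr rfl fun s _ => ?_
  rw [Finset.sum_eq_single (s (Fin.last k))]
  · simp only [Xsucc, Finset.mul_sum, Finset.sum_mul]
    refine Finset.sum_congr rfl fun m _ => ?_
    simp only [if_pos rfl, if_true, eq_self_iff_true, one_mul]
    ring
  · intro b _ hb
    refine Finset.sum_eq_zero fun m _ => ?_
    rw [if_neg (fun hc => hb hc.symm)]
    ring
  · intro habs
    exact absurd (Finset.mem_univ _) habs
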